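/- There exists a bijection φ of the vertex set Fin 7 × Fin 3 onto itself such that for every vertex v, there is a graph isomorphism between the subgraph of G₁ induced on the 2-ball around v in G₁ and the subgraph of G₂ induced on the 2-ball around φ(v) in G₂ which maps v to φ(v). Thus corresponding vertices of G₁ and G₂ have identical (isomorphic) 2-hop neighborhoods, even though the minimum vertex cover sizes of G₁ and G₂ differ (9 versus 10). -/

import Mathlib

set_option maxHeartbeats 4000000
set_option maxRecDepth 10000


/-- The `k`-ball around a vertex `v`: vertices reachable from `v` at graph distance at
most `k`. -/
def ball {V : Type*} (G : SimpleGraph V) (v : V) (k : ℕ) : Set V :=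
  {u | G.Reachable v u ∧ G.dist v u ≤ k}

lemma self_mem_ball {V : Type*} (G : SimpleGraph V) (v : V) (k : ℕ) : v ∈ ball G v k :=
  ⟨SimpleGraph.Reachable.refl v, by simp [SimpleGraph.dist_self]⟩

/-- The edges of `G₁`: the balanced binary tree on 7 nodes with each node replaced by a
chain of 3 vertices. -/
def edgesG1 : List ((Fin 7 × Fin 3) × (Fin 7 × Fin 3)) :=
  [((0, 0), (0, 1)), ((0, 1), (0, 2)),
   ((1, 0), (1, 1)), ((1, 1), (1, 2)),
   ((2, 0), (2, 1)), ((2, 1), (2, 2)),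
   ((3, 0), (3, 1)), ((3, 1), (3, 2)),
   ((4, 0), (4, 1)), ((4, 1), (4, 2)),
   ((5, 0), (5, 1)), ((5, 1), (5, 2)),
   ((6, 0), (6, 1)), ((6, 1), (6, 2)),
   ((0, 2), (1, 0)), ((0, 2), (2, 0)),
   ((1, 2), (3, 0)), ((1, 2), (4, 0)),
   ((2, 2), (5, 0)), ((2, 2), (6, 0))]

/-- The graph `G₁`. -/
def G1 : SimpleGraph (Fin 7 × Fin 3) where
  Adj a b := (a, b) ∈ edgesG1 ∨ (b, a) ∈ edgesG1
  symm := ⟨fun _ _ h => h.symm⟩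
  loopless := ⟨by intro a; fin_cases a <;> simp [edgesG1]⟩

/-- The edges of `G₂`: the completely imbalanced binary tree of depth 3 on 7 nodes with
each node replaced by a chain of 3 vertices. -/
def edgesG2 : List ((Fin 7 × Fin 3) × (Fin 7 × Fin 3)) :=
  [((0, 0), (0, 1)), ((0, 1), (0, 2)),
   ((1, 0), (1, 1)), ((1, 1), (1, 2)),
   ((2, 0), (2, 1)), ((2, 1), (2, 2)),
   ((3, 0), (3, 1)), ((3, 1), (3, 2)),
   ((4, 0), (4, 1)), ((4, 1), (4, 2)),
   ((5, 0), (5, 1)), ((5, 1), (5, 2)),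
   ((6, 0), (6, 1)), ((6, 1), (6, 2)),
   ((0, 2), (1, 0)), ((0, 2), (2, 0)),
   ((1, 2), (3, 0)), ((1, 2), (4, 0)),
   ((3, 2), (5, 0)), ((3, 2), (6, 0))]

/-- The graph `G₂`. -/
def G2 : SimpleGraph (Fin 7 × Fin 3) where
  Adj a b := (a, b) ∈ edgesG2 ∨ (b, a) ∈ edgesG2
  symm := ⟨fun _ _ h => h.symm⟩
  loopless := ⟨by intro a; fin_cases a <;> simp [edgesG2]⟩

/-- A set `S` of vertices is a vertex cover of `G` if every edge of `G` has at least one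
endpoint in `S`. -/
def IsVertexCover {V : Type*} (G : SimpleGraph V) (S : Finset V) : Prop :=
  ∀ ⦃v w : V⦄, G.Adj v w → v ∈ S ∨ w ∈ S


lemma mem_ball_two {V : Type*} (G : SimpleGraph V) (v u : V) :
    u ∈ ball G v 2 ↔ u = v ∨ G.Adj v u ∨ ∃ w, G.Adj v w ∧ G.Adj w u := by
  constructor
  · rintro ⟨hr, hd⟩
    obtain ⟨p, hp⟩ := hr.exists_walk_length_eq_dist
    rw [← hp] at hd
    rcases p with _ | ⟨h, p⟩
    · exact Or.inl rfl
    rcases p with _ | ⟨h2, p⟩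
    · exact Or.inr (Or.inl h)
    rcases p with _ | ⟨h3, p⟩
    · exact Or.inr (Or.inr ⟨_, h, h2⟩)
    · simp [SimpleGraph.Walk.length_cons] at hd
  · rintro (rfl | h | ⟨w, h1, h2⟩)
    · exact ⟨SimpleGraph.Reachable.refl _, by simp [SimpleGraph.dist_self]⟩
    · exact ⟨h.reachable, le_trans (SimpleGraph.dist_le h.toWalk) (by simp)⟩
    · exact ⟨⟨.cons h1 h2.toWalk⟩, le_trans (SimpleGraph.dist_le (.cons h1 h2.toWalk)) (by simp)⟩

lemma iso_of_perm {V W : Type*} (G : SimpleGraph V) (H : SimpleGraph W) (v : V) (w : W)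
    (π : V ≃ W)
    (h1 : ∀ u, u ∈ ball G v 2 ↔ π u ∈ ball H w 2)
    (h2 : ∀ a b : V, a ∈ ball G v 2 → b ∈ ball G v 2 → (G.Adj a b ↔ H.Adj (π a) (π b)))
    (h3 : π v = w) :
    ∃ e : G.induce (ball G v 2) ≃g H.induce (ball H w 2),
      e ⟨v, self_mem_ball G v 2⟩ = ⟨w, self_mem_ball H w 2⟩ := by
  refine ⟨⟨π.subtypeEquiv h1, ?_⟩, ?_⟩
  · intro a b
    exact (h2 a b a.2 b.2).symm
  · exact Subtype.ext h3

instance decAdjG1 : DecidableRel G1.Adj :=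
  fun a b => inferInstanceAs (Decidable ((a, b) ∈ edgesG1 ∨ (b, a) ∈ edgesG1))

instance decAdjG2 : DecidableRel G2.Adj :=
  fun a b => inferInstanceAs (Decidable ((a, b) ∈ edgesG2 ∨ (b, a) ∈ edgesG2))

def sigmaNode : Fin 7 ≃ Fin 7 :=
  ⟨(![0, 1, 3, 4, 2, 5, 6] : Fin 7 → Fin 7), (![0, 1, 4, 2, 3, 5, 6] : Fin 7 → Fin 7),
    by intro x; revert x; decide, by intro x; revert x; decide⟩

def pA : Fin 7 ≃ Fin 7 :=
  ⟨(![1, 4, 3, 0, 2, 5, 6] : Fin 7 → Fin 7), (![3, 0, 4, 2, 1, 5, 6] : Fin 7 → Fin 7),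
    by intro x; revert x; decide, by intro x; revert x; decide⟩

def pB : Fin 7 ≃ Fin 7 :=
  ⟨(![3, 0, 4, 1, 2, 5, 6] : Fin 7 → Fin 7), (![1, 3, 4, 0, 2, 5, 6] : Fin 7 → Fin 7),
    by intro x; revert x; decide, by intro x; revert x; decide⟩

def pC : Fin 7 ≃ Fin 7 := Equiv.swap 3 4

def pD : Fin 7 ≃ Fin 7 := Equiv.swap 2 3

def phiEq : (Fin 7 × Fin 3) ≃ (Fin 7 × Fin 3) := sigmaNode.prodCongr (Equiv.refl _)

def piEq (v : Fin 7 × Fin 3) : (Fin 7 × Fin 3) ≃ (Fin 7 × Fin 3) :=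
  (![Equiv.refl _, Equiv.refl _, pA, pC, pB, pD, pD] v.1).prodCongr (Equiv.refl _)

lemma piBall : ∀ v u : Fin 7 × Fin 3,
    u ∈ ball G1 v 2 ↔ piEq v u ∈ ball G2 (phiEq v) 2 := by
  simp only [mem_ball_two]
  decide

lemma piAdj : ∀ v a b : Fin 7 × Fin 3, a ∈ ball G1 v 2 → b ∈ ball G1 v 2 →
    (G1.Adj a b ↔ G2.Adj (piEq v a) (piEq v b)) := by
  simp only [mem_ball_two]
  decide

lemma piPoint : ∀ v : Fin 7 × Fin 3, piEq v v = phiEq v := by decide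

lemma matching_bound {V : Type*} [DecidableEq V] (G : SimpleGraph V) (S : Finset V)
    (h : IsVertexCover G S) (M : Finset (V × V))
    (hadj : ∀ p ∈ M, G.Adj p.1 p.2)
    (hdisj : ∀ p ∈ M, ∀ q ∈ M, p ≠ q →
      p.1 ≠ q.1 ∧ p.1 ≠ q.2 ∧ p.2 ≠ q.1 ∧ p.2 ≠ q.2) :
    M.card ≤ S.card := by
  classical
  apply Finset.card_le_card_of_injOn (fun p => if p.1 ∈ S then p.1 else p.2)
  · intro p hp
    dsimp only
    split
    · assumption
    · rcases h (hadj p hp) with h1 | h2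
      · contradiction
      · exact h2
  · intro p hp q hq hpq
    by_contra hne
    obtain ⟨h11, h12, h21, h22⟩ := hdisj p (by simpa using hp) q (by simpa using hq) hne
    dsimp only at hpq
    split at hpq <;> split at hpq <;> simp_all

def S1 : Finset (Fin 7 × Fin 3) :=
  {(0, 1), (1, 0), (1, 2), (2, 0), (2, 2), (3, 1), (4, 1), (5, 1), (6, 1)}

def S2 : Finset (Fin 7 × Fin 3) :=
  {(0, 1), (1, 0), (1, 2), (2, 0), (2, 1), (3, 0), (3, 2), (4, 1), (5, 1), (6, 1)}

def M1 : Finset ((Fin 7 × Fin 3) × (Fin 7 × Fin 3)) :=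
  {((0, 0), (0, 1)), ((0, 2), (1, 0)), ((1, 1), (1, 2)), ((2, 0), (2, 1)),
   ((2, 2), (5, 0)), ((3, 0), (3, 1)), ((4, 0), (4, 1)), ((5, 1), (5, 2)),
   ((6, 0), (6, 1))}

def M2 : Finset ((Fin 7 × Fin 3) × (Fin 7 × Fin 3)) :=
  {((0, 0), (0, 1)), ((0, 2), (2, 0)), ((2, 1), (2, 2)), ((1, 0), (1, 1)),
   ((1, 2), (4, 0)), ((4, 1), (4, 2)), ((3, 0), (3, 1)), ((3, 2), (5, 0)),
   ((5, 1), (5, 2)), ((6, 0), (6, 1))}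

/-- There is a bijection `φ` of the vertices such that every vertex `v` of `G₁` has a
2-hop neighborhood isomorphic (via an isomorphism sending `v` to `φ v`) to the 2-hop
neighborhood of `φ v` in `G₂`, even though the minimum vertex cover sizes of `G₁` and
`G₂` are 9 and 10 respectively. -/
theorem G1_G2_locally_isomorphic_but_different_cover_number :
    (∃ φ : (Fin 7 × Fin 3) ≃ (Fin 7 × Fin 3), ∀ v : Fin 7 × Fin 3,
      ∃ e : G1.induce (ball G1 v 2) ≃g G2.induce (ball G2 (φ v) 2),
        e ⟨v, self_mem_ball G1 v 2⟩ = ⟨φ v, self_mem_ball G2 (φ v) 2⟩) ∧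
    ((∃ S : Finset (Fin 7 × Fin 3), IsVertexCover G1 S ∧ S.card = 9) ∧
      (∀ S : Finset (Fin 7 × Fin 3), IsVertexCover G1 S → 9 ≤ S.card)) ∧
    ((∃ S : Finset (Fin 7 × Fin 3), IsVertexCover G2 S ∧ S.card = 10) ∧
      (∀ S : Finset (Fin 7 × Fin 3), IsVertexCover G2 S → 10 ≤ S.card)) := by
  refine ⟨⟨phiEq, fun v => iso_of_perm G1 G2 v (phiEq v) (piEq v)
      (piBall v) (piAdj v) (piPoint v)⟩, ⟨⟨S1, ?_, by decide⟩, ?_⟩, ⟨⟨S2, ?_, by decide⟩, ?_⟩⟩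
  · intro v w h; revert v w h; decide
  · intro S hS
    have h := matching_bound G1 S hS M1 (by decide) (by decide)
    have h9 : M1.card = 9 := by decide
    omega
  · intro v w h; revert v w h; decide
  · intro S hS
    have h := matching_bound G2 S hS M2 (by decide) (by decide)
    have h10 : M2.card = 10 := by decide
    omega
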